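/- A sequence of non-negative integers is a 101-avoiding ascent sequence if and only if it is a restricted growth function avoiding both patterns 0101 and 1010. -/

import Mathlib

def ascents (l : List ℕ) : ℕ :=
  ((l.zip l.tail).filter (fun p => p.1 < p.2)).length

def IsAscSeq (l : List ℕ) : Prop :=
  l.getD 0 0 = 0 ∧
  ∀ k, k < l.length → 0 < k → l.getD k 0 ≤ ascents (l.take k) + 1

def IsRGF (l : List ℕ) : Prop :=
  l.getD 0 0 = 0 ∧
  ∀ k, k < l.length → ∀ j, l.getD k 0 = j + 1 → ∃ i, i < k ∧ l.getD i 0 = j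

def SelfModified (l : List ℕ) : Prop :=
  IsAscSeq l ∧
  ∀ k, k < l.length → 0 < k →
    l.getD k 0 ≤ l.getD (k - 1) 0 ∨ l.getD k 0 = ascents (l.take k) + 1

def Contains101 (l : List ℕ) : Prop :=
  ∃ i j k, i < j ∧ j < k ∧ k < l.length ∧
    l.getD i 0 = l.getD k 0 ∧ l.getD j 0 < l.getD k 0

def Contains0101 (l : List ℕ) : Prop :=
  ∃ i j k m, i < j ∧ j < k ∧ k < m ∧ m < l.length ∧
    l.getD i 0 = l.getD k 0 ∧ l.getD j 0 = l.getD m 0 ∧ l.getD i 0 < l.getD j 0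

def Contains1010 (l : List ℕ) : Prop :=
  ∃ i j k m, i < j ∧ j < k ∧ k < m ∧ m < l.length ∧
    l.getD i 0 = l.getD k 0 ∧ l.getD j 0 = l.getD m 0 ∧ l.getD j 0 < l.getD i 0

/-- The view of position `i` in the sequence `a`: the number of indices `j > i` such
that `a j` strictly exceeds all entries `a k` for `i ≤ k < j`.  This agrees with the
recursive definition `v i = v j + 1` for `j` the least index `> i` with `a j > a i`. -/
def view {α : Type*} [LinearOrder α] [Inhabited α] (a : List α) (i : ℕ) : ℕ :=
  ((List.range a.length).filter (fun j =>
    decide (i < j ∧ ∀ k, k < j → i ≤ k → a.getD k default < a.getD j default))).length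

/-- The panorama of `a`: the views of the positions of `a`, listed grouped by entry
value from largest value to smallest, positions within a group in increasing order. -/
def pan {α : Type*} [LinearOrder α] [Inhabited α] (a : List α) : List ℕ :=
  ((List.range a.length).mergeSort (fun i j =>
    decide (a.getD j default < a.getD i default ∨
      (a.getD i default = a.getD j default ∧ i ≤ j)))).map (view a)

/-- A square matrix of natural numbers, given by a dimension and an entry function
(indices are 0-based; entries with an index `≥ d` are irrelevant/zero). -/
structure FMat where
  d : ℕ
  entry : ℕ → ℕ → ℕ

/-- 0-based index of the first row whose rightmost entry is nonzero. -/
noncomputable def mindex (M : FMat) : ℕ :=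
  sInf {i | M.entry i (M.d - 1) ≠ 0}

/-- One step of the recursive bijection from ascent sequences to Fishburn matrices,
with cases AM1, AM2, AM3 (0-based indices). -/
noncomputable def fStep (M : FMat) (a : ℕ) : FMat :=
  if a ≤ mindex M then
    -- AM1: increase entry (a, d-1)
    ⟨M.d, fun i j => M.entry i j + if i = a ∧ j = M.d - 1 then 1 else 0⟩
  else if a = M.d then
    -- AM2: append a new row and column, with 1 in the new diagonal entry
    ⟨M.d + 1, fun i j =>
      if i = M.d ∨ j = M.d then (if i = M.d ∧ j = M.d then 1 else 0)
      else M.entry i j⟩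
  else
    -- AM3: insert a new row and column at index a
    ⟨M.d + 1, fun i j =>
      if i = a then (if j = M.d then 1 else 0)
      else if j = a then (if i < a then M.entry i (M.d - 1) else 0)
      else if j = M.d ∧ i < a then 0
      else M.entry (if i < a then i else i - 1) (if j < a then j else j - 1)⟩

/-- The map from ascent sequences to Fishburn matrices. -/
noncomputable def fAM (l : List ℕ) : FMat :=
  l.tail.foldl fStep ⟨1, fun i j => if i = 0 ∧ j = 0 then 1 else 0⟩

/-- Fishburn matrix: upper triangular (and supported on `[0,d) × [0,d)`),
with no zero row and no zero column. -/
def IsFishburn (M : FMat) : Prop :=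
  (∀ i j, (M.d ≤ i ∨ M.d ≤ j ∨ j < i) → M.entry i j = 0) ∧
  (∀ i, i < M.d → ∃ j, j < M.d ∧ M.entry i j ≠ 0) ∧
  (∀ j, j < M.d → ∃ i, i < M.d ∧ M.entry i j ≠ 0)

def entrySum (M : FMat) : ℕ :=
  ∑ i ∈ Finset.range M.d, ∑ j ∈ Finset.range M.d, M.entry i j

/-- Reflection of a matrix through its antidiagonal. -/
def reflect (M : FMat) : FMat :=
  ⟨M.d, fun i j => if i < M.d ∧ j < M.d then M.entry (M.d - 1 - j) (M.d - 1 - i) else 0⟩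

/-- The canonical sequence `(0^{m₀₀}, 1^{m₁₁}, 0^{m₀₁}, 2^{m₂₂}, 1^{m₁₂}, 0^{m₀₂}, …)`
(0-based indices) associated to a matrix; this is `f_MA(M)` for `M ∈ RMatrices`. -/
def canonSeq (M : FMat) : List ℕ :=
  (List.range M.d).flatMap (fun j =>
    (List.range (j + 1)).reverse.flatMap (fun i => List.replicate (M.entry i j) i))

/-- The dual canonical sequence
`(0^{m_{d-1,d-1}}, 1^{m_{d-2,d-2}}, 0^{m_{d-2,d-1}}, …, (d-1)^{m_{0,0}}, …, 0^{m_{0,d-1}})`,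
i.e. `f_MA` applied to the antidiagonal reflection of `M`. -/
def dualCanonSeq (M : FMat) : List ℕ :=
  (List.range M.d).flatMap (fun j =>
    (List.range (j + 1)).reverse.flatMap (fun i =>
      List.replicate (M.entry (M.d - 1 - j) (M.d - 1 - i)) i))

/-- A matrix is SE-free if it has no pair of nonzero entries `m i j`, `m i' j'`
with `i < i'`, `j < j'` and `i' ≤ j`. -/
def SEFree (M : FMat) : Prop :=
  ¬ ∃ i j i' j', i < i' ∧ j < j' ∧ i' ≤ j ∧ j' < M.d ∧
    M.entry i j ≠ 0 ∧ M.entry i' j' ≠ 0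

/-- Generalized ballot sequence (Yamanouchi word): in every prefix, each value `j+1`
occurs at most as often as `j`. -/
def IsBallot (l : List ℕ) : Prop :=
  ∀ k j, (l.take k).count (j + 1) ≤ (l.take k).count j


def ascCount (f : ℕ → ℕ) (k : ℕ) : ℕ :=
  ((List.range k).filter (fun i => decide (f i < f (i+1)))).length

lemma ascCount_succ (f : ℕ → ℕ) (k : ℕ) :
    ascCount f (k+1) = ascCount f k + (if f k < f (k+1) then 1 else 0) := by
  unfold ascCount
  rw [List.range_succ, List.filter_append, List.length_append]
  congr 1
  by_cases h : f k < f (k+1) <;> simp [h]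

lemma ascCount_shift (f : ℕ → ℕ) (m : ℕ) :
    ascCount f (m+1) = (if f 0 < f 1 then 1 else 0) + ascCount (fun i => f (i+1)) m := by
  unfold ascCount
  rw [List.range_succ_eq_map, List.filter_cons, List.filter_map]
  have : ((fun i => decide (f i < f (i+1))) ∘ Nat.succ) = (fun i => decide (f (i+1) < f (i+1+1))) := by
    funext i; simp [Function.comp, Nat.succ_eq_add_one]
  rw [this]
  by_cases h : f 0 < f 1 <;> simp [h] <;> omega

lemma ascCount_congr (f g : ℕ → ℕ) (k : ℕ) (h : ∀ i ≤ k, f i = g i) :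
    ascCount f k = ascCount g k := by
  unfold ascCount
  rw [List.filter_congr]
  intro i hi
  rw [List.mem_range] at hi
  rw [h i (le_of_lt hi), h (i+1) hi]

lemma ascents_eq (l : List ℕ) :
    ascents l = ascCount (fun i => l.getD i 0) (l.length - 1) := by
  induction l with
  | nil => simp [ascents, ascCount]
  | cons x t ih =>
    cases t with
    | nil => simp [ascents, ascCount]
    | cons y t' =>
      have hz : (x :: y :: t').zip (y :: t') = (x, y) :: ((y :: t').zip t') := rfl
      have h1 : ascents (x :: y :: t') = (if x < y then 1 else 0) + ascents (y :: t') := by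
        unfold ascents
        rw [show (x :: y :: t').tail = y :: t' from rfl, hz, List.filter_cons]
        by_cases h : x < y <;> simp [h] <;> omega
      rw [h1, ih]
      have hlen : (x :: y :: t').length - 1 = (y :: t').length - 1 + 1 := by
        simp
      rw [hlen, ascCount_shift]
      rfl

lemma getD_take (l : List ℕ) (k i : ℕ) (hik : i < k) (hk : k ≤ l.length) :
    (l.take k).getD i 0 = l.getD i 0 := by
  have h1 : i < (l.take k).length := by
    rw [List.length_take]; omega
  have h2 : i < l.length := by omega
  rw [List.getD_eq_getElem _ _ h1, List.getD_eq_getElem _ _ h2]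
  exact List.getElem_take

lemma ascents_take (l : List ℕ) (k : ℕ) (hk : k ≤ l.length) (h0 : 0 < k) :
    ascents (l.take k) = ascCount (fun i => l.getD i 0) (k - 1) := by
  rw [ascents_eq]
  have hlen : (l.take k).length = k := by rw [List.length_take]; omega
  rw [hlen]
  apply ascCount_congr
  intro i hi
  exact getD_take l k i (by omega) hk


lemma fin_sup_succ (f : ℕ → ℕ) (k : ℕ) :
    (Finset.range (k+2)).sup f = f (k+1) ⊔ (Finset.range (k+1)).sup f := by
  rw [Finset.range_add_one, Finset.sup_insert]

lemma fin_le_sup (f : ℕ → ℕ) {i k : ℕ} (h : i ≤ k) :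
    f i ≤ (Finset.range (k+1)).sup f :=
  Finset.le_sup (Finset.mem_range.mpr (by omega))

lemma key1 (l : List ℕ) (h0 : l.getD 0 0 = 0)
    (hA : ∀ k, k < l.length → 0 < k → l.getD k 0 ≤ ascents (l.take k) + 1)
    (h101 : ¬ Contains101 l) :
    ∀ k, k < l.length →
      ascCount (fun i => l.getD i 0) k = (Finset.range (k+1)).sup (fun i => l.getD i 0) ∧
      ∀ v ≤ (Finset.range (k+1)).sup (fun i => l.getD i 0), ∃ i ≤ k, l.getD i 0 = v := by
  set f : ℕ → ℕ := fun i => l.getD i 0 with hf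
  intro k
  induction k with
  | zero =>
    intro _
    have hsup : (Finset.range (0+1)).sup f = 0 := by
      rw [Finset.range_one, Finset.sup_singleton]; exact h0
    rw [hsup]
    constructor
    · rfl
    · intro v hv
      exact ⟨0, le_refl 0, by omega⟩
  | succ k ih =>
    intro hk1
    have hk : k < l.length := by omega
    obtain ⟨ihA, ihV⟩ := ih hk
    have e1 : l.getD (k+1) 0 = f (k+1) := rfl
    have e0 : l.getD k 0 = f k := rfl
    have ha : f (k+1) ≤ ascCount f k + 1 := by
      have := hA (k+1) hk1 (by omega)
      rwa [ascents_take l (k+1) (by omega) (by omega), Nat.add_sub_cancel] at this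
    have haM : f (k+1) ≤ (Finset.range (k+1)).sup f + 1 := by rw [← ihA]; exact ha
    rw [ascCount_succ, fin_sup_succ]
    rcases Nat.lt_or_ge ((Finset.range (k+1)).sup f) (f (k+1)) with hcase | hcase
    · -- new max : f (k+1) = sup + 1
      have hfk : f k < f (k+1) := lt_of_le_of_lt (fin_le_sup f (le_refl k)) hcase
      have hmax : f (k+1) ⊔ (Finset.range (k+1)).sup f = f (k+1) := by
        exact max_eq_left (le_of_lt hcase)
      rw [hmax, if_pos hfk]
      constructor
      · omega
      · intro v hv
        rcases Nat.lt_or_ge v (f (k+1)) with h | h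
        · obtain ⟨i, hi, hiv⟩ := ihV v (by omega)
          exact ⟨i, by omega, hiv⟩
        · exact ⟨k+1, le_refl _, by omega⟩
    · -- old max
      have hmax : f (k+1) ⊔ (Finset.range (k+1)).sup f = (Finset.range (k+1)).sup f :=
        max_eq_right hcase
      rw [hmax]
      have hnoasc : ¬ f k < f (k+1) := by
        intro hasc
        obtain ⟨i, hi, hiv⟩ := ihV (f (k+1)) hcase
        have hik : i < k := by
          rcases Nat.lt_or_ge i k with h | h
          · exact h
          · exfalso; have : i = k := by omega
            rw [this] at hiv; omega
        exact h101 ⟨i, k, k+1, hik, by omega, hk1, hiv.symm ▸ rfl, hasc⟩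
      rw [if_neg hnoasc]
      exact ⟨by omega, fun v hv => (ihV v hv).imp (fun i hi => ⟨by omega, hi.2⟩)⟩


lemma key2 (l : List ℕ) (h0 : l.getD 0 0 = 0)
    (hR : ∀ k, k < l.length → ∀ j, l.getD k 0 = j + 1 → ∃ i, i < k ∧ l.getD i 0 = j) :
    ∀ k, k < l.length →
      (Finset.range (k+1)).sup (fun i => l.getD i 0) ≤ ascCount (fun i => l.getD i 0) k ∧
      ∀ v ≤ (Finset.range (k+1)).sup (fun i => l.getD i 0), ∃ i ≤ k, l.getD i 0 = v := by
  set f : ℕ → ℕ := fun i => l.getD i 0 with hf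
  intro k
  induction k with
  | zero =>
    intro _
    have hsup : (Finset.range (0+1)).sup f = 0 := by
      rw [Finset.range_one, Finset.sup_singleton]; exact h0
    rw [hsup]
    exact ⟨by omega, fun v hv => ⟨0, le_refl 0, by omega⟩⟩
  | succ k ih =>
    intro hk1
    have hk : k < l.length := by omega
    obtain ⟨ihA, ihV⟩ := ih hk
    have e1 : l.getD (k+1) 0 = f (k+1) := rfl
    have e0 : l.getD k 0 = f k := rfl
    rw [ascCount_succ, fin_sup_succ]
    rcases le_or_gt (f (k+1)) ((Finset.range (k+1)).sup f) with hcase | hcase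
    · rw [max_eq_right hcase]
      constructor
      · split <;> omega
      · intro v hv
        exact (ihV v hv).imp (fun i hi => ⟨by omega, hi.2⟩)
    · have hpos : 0 < f (k+1) := by
        have := fin_le_sup f (le_refl k)
        omega
      obtain ⟨i, hik, hiv⟩ := hR (k+1) hk1 (f (k+1) - 1) (by omega)
      have hjle : f (k+1) - 1 ≤ (Finset.range (k+1)).sup f := by
        have := fin_le_sup f (show i ≤ k by omega)
        have e2 : l.getD i 0 = f i := rfl
        omega
      have hfk : f k < f (k+1) := lt_of_le_of_lt (fin_le_sup f (le_refl k)) hcase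
      rw [max_eq_left (le_of_lt hcase), if_pos hfk]
      constructor
      · omega
      · intro v hv
        rcases Nat.lt_or_ge v (f (k+1)) with h | h
        · exact (ihV v (by omega)).imp (fun i hi => ⟨by omega, hi.2⟩)
        · exact ⟨k+1, le_refl _, by omega⟩

theorem casc_characterization (l : List ℕ) :
    (IsAscSeq l ∧ ¬ Contains101 l) ↔
    (IsRGF l ∧ ¬ Contains0101 l ∧ ¬ Contains1010 l) := by
  constructor
  · rintro ⟨⟨h0, hA⟩, h101⟩
    refine ⟨⟨h0, ?_⟩, ?_, ?_⟩
    · intro k hk j hj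
      have hkpos : 0 < k := by
        rcases Nat.eq_zero_or_pos k with h | h
        · exfalso; rw [h] at hj; omega
        · exact h
      obtain ⟨hasc, hval⟩ := key1 l h0 hA h101 (k-1) (by omega)
      have hb : l.getD k 0 ≤ ascents (l.take k) + 1 := hA k hk hkpos
      rw [ascents_take l k (by omega) hkpos, hasc] at hb
      have hkk : k - 1 + 1 = k := by omega
      obtain ⟨i, hi, hiv⟩ := hval j (by omega)
      exact ⟨i, by omega, hiv⟩
    · rintro ⟨i, j, k, m, hij, hjk, hkm, hm, e1, e2, e3⟩
      exact h101 ⟨j, k, m, hjk, hkm, hm, e2, by omega⟩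
    · rintro ⟨i, j, k, m, hij, hjk, hkm, hm, e1, e2, e3⟩
      exact h101 ⟨i, j, k, hij, hjk, by omega, e1, by omega⟩
  · rintro ⟨⟨h0, hR⟩, h01, h10⟩
    have h101 : ¬ Contains101 l := by
      rintro ⟨i, j, k, hij, hjk, hk, heq, hlt⟩
      obtain ⟨_, hval⟩ := key2 l h0 hR i (by omega)
      have hvi : l.getD i 0 ≤ (Finset.range (i+1)).sup (fun t => l.getD t 0) := by
        simpa using fin_le_sup (fun t => l.getD t 0) (le_refl i)
      obtain ⟨p, hpi, hpv⟩ := hval (l.getD j 0) (by omega)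
      have hplt : p < i := by
        rcases Nat.lt_or_ge p i with h | h
        · exact h
        · exfalso; have : p = i := by omega
          rw [this] at hpv; omega
      exact h01 ⟨p, i, j, k, hplt, hij, hjk, hk, hpv, heq, by omega⟩
    refine ⟨⟨h0, ?_⟩, h101⟩
    intro k hk hkpos
    rcases Nat.eq_zero_or_pos (l.getD k 0) with h | h
    · omega
    obtain ⟨i, hik, hiv⟩ := hR k hk (l.getD k 0 - 1) (by omega)
    obtain ⟨hasc, _⟩ := key2 l h0 hR (k-1) (by omega)
    rw [ascents_take l k (by omega) hkpos]
    have hkk : k - 1 + 1 = k := by omega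
    rw [hkk] at hasc
    have : l.getD i 0 ≤ (Finset.range k).sup (fun t => l.getD t 0) := by
      have := fin_le_sup (fun t => l.getD t 0) (show i ≤ k - 1 by omega)
      rwa [hkk] at this
    omega
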